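/- (The map f ↦ X_f is a Lie algebra antihomomorphism.) Let f, g : ℝ^n × ℝ^n → ℝ be twice continuously differentiable. Then for every x ∈ ℝ^n × ℝ^n, X_{{f,g}}(x) = −[X_f, X_g](x), where the commutator of two differentiable vector fields X, Y : ℝ^n × ℝ^n → ℝ^n × ℝ^n is [X, Y](x) = DY(x)(X(x)) − DX(x)(Y(x)), with DX(x) the Fréchet derivative of X at x. -/

import Mathlib

open scoped BigOperators

/-- The `i`-th coordinate direction in the `q` (position) factor of phase space `ℝⁿ × ℝⁿ`. -/
noncomputable def eQ (n : ℕ) (i : Fin n) : (Fin n → ℝ) × (Fin n → ℝ) :=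
  (Pi.single i 1, 0)

/-- The `i`-th coordinate direction in the `p` (momentum) factor of phase space `ℝⁿ × ℝⁿ`. -/
noncomputable def eP (n : ℕ) (i : Fin n) : (Fin n → ℝ) × (Fin n → ℝ) :=
  (0, Pi.single i 1)

/-- The canonical Poisson bracket `{f,g} = Σᵢ (∂f/∂qⁱ ∂g/∂pᵢ − ∂f/∂pᵢ ∂g/∂qⁱ)` on `ℝⁿ × ℝⁿ`. -/
noncomputable def poissonBracket {n : ℕ} (f g : (Fin n → ℝ) × (Fin n → ℝ) → ℝ)
    (x : (Fin n → ℝ) × (Fin n → ℝ)) : ℝ :=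
  ∑ i : Fin n, (fderiv ℝ f x (eQ n i) * fderiv ℝ g x (eP n i)
    - fderiv ℝ f x (eP n i) * fderiv ℝ g x (eQ n i))

/-- The Hamiltonian vector field `X_f = (∂f/∂p₁,…,∂f/∂pₙ, −∂f/∂q¹,…,−∂f/∂qⁿ)` on `ℝⁿ × ℝⁿ`. -/
noncomputable def hamVF {n : ℕ} (f : (Fin n → ℝ) × (Fin n → ℝ) → ℝ)
    (x : (Fin n → ℝ) × (Fin n → ℝ)) : (Fin n → ℝ) × (Fin n → ℝ) :=
  (fun i => fderiv ℝ f x (eP n i), fun i => - fderiv ℝ f x (eQ n i))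

section Aux

variable {n : ℕ}

local notation "E" => (Fin n → ℝ) × (Fin n → ℝ)

/-- Derivative of the directional derivative function. -/
lemma key_hasFDerivAt (f : E → ℝ) (hf : ContDiff ℝ 2 f) (x v : E) :
    HasFDerivAt (fun y => fderiv ℝ f y v) ((fderiv ℝ (fderiv ℝ f) x).flip v) x := by
  have h1 : DifferentiableAt ℝ (fderiv ℝ f) x :=
    ((hf.fderiv_right (m := 1) (by norm_num)).differentiable one_ne_zero) x
  have := h1.hasFDerivAt.clm_apply (hasFDerivAt_const v x)
  simpa using this

/-- The explicit derivative of the Hamiltonian vector field. -/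
noncomputable def hamD (f : E → ℝ) (x : E) : E →L[ℝ] E :=
  (ContinuousLinearMap.pi fun i => (fderiv ℝ (fderiv ℝ f) x).flip (eP n i)).prod
    (ContinuousLinearMap.pi fun i => -((fderiv ℝ (fderiv ℝ f) x).flip (eQ n i)))

lemma hamVF_hasFDerivAt (f : E → ℝ) (hf : ContDiff ℝ 2 f) (x : E) :
    HasFDerivAt (hamVF f) (hamD f x) x := by
  apply HasFDerivAt.prodMk
  · exact hasFDerivAt_pi.2 fun i => key_hasFDerivAt f hf x (eP n i)
  · exact hasFDerivAt_pi.2 fun i => (key_hasFDerivAt f hf x (eQ n i)).neg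

/-- Expansion of a continuous linear functional on the Hamiltonian vector field. -/
lemma clm_hamVF (f : E → ℝ) (x : E) (B : E →L[ℝ] ℝ) :
    B (hamVF f x) = ∑ i : Fin n, fderiv ℝ f x (eP n i) * B (eQ n i)
      - ∑ i : Fin n, fderiv ℝ f x (eQ n i) * B (eP n i) := by
  have hv : hamVF f x = (∑ i : Fin n, fderiv ℝ f x (eP n i) • eQ n i)
      - ∑ i : Fin n, fderiv ℝ f x (eQ n i) • eP n i := by
    ext j
    · simp [hamVF, eQ, eP, Prod.fst_sum, Prod.snd_sum, Finset.sum_apply,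
        Pi.single_apply, Finset.sum_ite_eq', mul_comm]
    · simp [hamVF, eQ, eP, Prod.fst_sum, Prod.snd_sum, Finset.sum_apply,
        Pi.single_apply, Finset.sum_ite_eq', mul_comm]
  rw [hv, map_sub, map_sum, map_sum]
  simp [smul_eq_mul]

end Aux

section Main

variable {n : ℕ}

local notation "E" => (Fin n → ℝ) × (Fin n → ℝ)

lemma pb_hasFDerivAt (f g : E → ℝ) (hf : ContDiff ℝ 2 f) (hg : ContDiff ℝ 2 g) (x : E) :
    HasFDerivAt (poissonBracket f g)
      (∑ i : Fin n,
        ((fderiv ℝ f x (eQ n i)) • (fderiv ℝ (fderiv ℝ g) x).flip (eP n i)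
          + (fderiv ℝ g x (eP n i)) • (fderiv ℝ (fderiv ℝ f) x).flip (eQ n i)
         - ((fderiv ℝ f x (eP n i)) • (fderiv ℝ (fderiv ℝ g) x).flip (eQ n i)
          + (fderiv ℝ g x (eQ n i)) • (fderiv ℝ (fderiv ℝ f) x).flip (eP n i)))) x := by
  apply HasFDerivAt.fun_sum
  intro i _
  exact ((key_hasFDerivAt f hf x (eQ n i)).mul (key_hasFDerivAt g hg x (eP n i))).sub
    ((key_hasFDerivAt f hf x (eP n i)).mul (key_hasFDerivAt g hg x (eQ n i)))

end Main

/-- (The map `f ↦ X_f` is a Lie algebra antihomomorphism.) For `C²`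
functions `f, g` on `ℝⁿ × ℝⁿ` one has `X_{{f,g}} = −[X_f, X_g]`, where
`[X,Y](x) = DY(x)(X(x)) − DX(x)(Y(x))`. -/
theorem hamVF_poissonBracket_eq_neg_commutator {n : ℕ}
    (f g : (Fin n → ℝ) × (Fin n → ℝ) → ℝ)
    (hf : ContDiff ℝ 2 f) (hg : ContDiff ℝ 2 g) :
    ∀ x, hamVF (poissonBracket f g) x
      = -(fderiv ℝ (hamVF g) x (hamVF f x) - fderiv ℝ (hamVF f) x (hamVF g x)) := by
  intro x
  set F := fderiv ℝ (fderiv ℝ f) x with hFdef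
  set G := fderiv ℝ (fderiv ℝ g) x with hGdef
  have symF : ∀ u v, F u v = F v u := fun u v =>
    (hf.contDiffAt.isSymmSndFDerivAt (by simp [minSmoothness_of_isRCLikeNormedField])) u v
  have symG : ∀ u v, G u v = G v u := fun u v =>
    (hg.contDiffAt.isSymmSndFDerivAt (by simp [minSmoothness_of_isRCLikeNormedField])) u v
  rw [(hamVF_hasFDerivAt g hg x).fderiv, (hamVF_hasFDerivAt f hf x).fderiv]
  have hpb := (pb_hasFDerivAt f g hf hg x).fderiv
  have expand : ∀ (v : (Fin n → ℝ) × (Fin n → ℝ)),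
      fderiv ℝ (poissonBracket f g) x v
        = ∑ i : Fin n,
            (fderiv ℝ f x (eQ n i) * G v (eP n i) + fderiv ℝ g x (eP n i) * F v (eQ n i)
              - (fderiv ℝ f x (eP n i) * G v (eQ n i)
                  + fderiv ℝ g x (eQ n i) * F v (eP n i))) := by
    intro v
    rw [hpb]
    simp [ContinuousLinearMap.sum_apply, smul_eq_mul]
    rfl
  have hGapp : ∀ (w : (Fin n → ℝ) × (Fin n → ℝ)), (hamD g x) w = (fun j => G w (eP n j), fun j => -(G w (eQ n j))) := by
    intro w; rfl
  have hFapp : ∀ (w : (Fin n → ℝ) × (Fin n → ℝ)), (hamD f x) w = (fun j => F w (eP n j), fun j => -(F w (eQ n j))) := by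
    intro w; rfl
  have eGP : ∀ j, G (hamVF f x) (eP n j)
      = ∑ i : Fin n, fderiv ℝ f x (eP n i) * G (eQ n i) (eP n j)
        - ∑ i : Fin n, fderiv ℝ f x (eQ n i) * G (eP n i) (eP n j) := fun j =>
    clm_hamVF f x (G.flip (eP n j))
  have eGQ : ∀ j, G (hamVF f x) (eQ n j)
      = ∑ i : Fin n, fderiv ℝ f x (eP n i) * G (eQ n i) (eQ n j)
        - ∑ i : Fin n, fderiv ℝ f x (eQ n i) * G (eP n i) (eQ n j) := fun j =>
    clm_hamVF f x (G.flip (eQ n j))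
  have eFP : ∀ j, F (hamVF g x) (eP n j)
      = ∑ i : Fin n, fderiv ℝ g x (eP n i) * F (eQ n i) (eP n j)
        - ∑ i : Fin n, fderiv ℝ g x (eQ n i) * F (eP n i) (eP n j) := fun j =>
    clm_hamVF g x (F.flip (eP n j))
  have eFQ : ∀ j, F (hamVF g x) (eQ n j)
      = ∑ i : Fin n, fderiv ℝ g x (eP n i) * F (eQ n i) (eQ n j)
        - ∑ i : Fin n, fderiv ℝ g x (eQ n i) * F (eP n i) (eQ n j) := fun j =>
    clm_hamVF g x (F.flip (eQ n j))
  apply Prod.ext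
  · funext j
    show fderiv ℝ (poissonBracket f g) x (eP n j)
      = (-(hamD g x (hamVF f x) - hamD f x (hamVF g x))).1 j
    rw [expand]
    have : (-(hamD g x (hamVF f x) - hamD f x (hamVF g x))).1 j
        = -(G (hamVF f x) (eP n j) - F (hamVF g x) (eP n j)) := by
      rw [hGapp, hFapp]; rfl
    rw [this, eGP, eFP, neg_sub, ← Finset.sum_sub_distrib, ← Finset.sum_sub_distrib,
      ← Finset.sum_sub_distrib]
    refine Finset.sum_congr rfl fun i _ => ?_
    rw [symG (eQ n i) (eP n j), symG (eP n i) (eP n j), symF (eQ n i) (eP n j),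
      symF (eP n i) (eP n j)]
    ring
  · funext j
    show -(fderiv ℝ (poissonBracket f g) x (eQ n j))
      = (-(hamD g x (hamVF f x) - hamD f x (hamVF g x))).2 j
    rw [expand]
    have : (-(hamD g x (hamVF f x) - hamD f x (hamVF g x))).2 j
        = -(-(G (hamVF f x) (eQ n j)) - -(F (hamVF g x) (eQ n j))) := by
      rw [hGapp, hFapp]; rfl
    rw [this, eGQ, eFQ]
    simp only [neg_sub, sub_neg_eq_add, ← Finset.sum_neg_distrib, ← Finset.sum_sub_distrib,
      ← Finset.sum_add_distrib]
    refine Finset.sum_congr rfl fun i _ => ?_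
    rw [symG (eQ n i) (eQ n j), symG (eP n i) (eQ n j), symF (eQ n i) (eQ n j),
      symF (eP n i) (eQ n j)]
    ring
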